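/- If D = (E, F) is a set system and B is a minimum-cardinality feasible set of the dual D^* = D^{*|E}, then D^{×|B} is dual normal, i.e., E is a feasible set of D^{×|B}. -/
import Mathlib


open Finset Polynomial

variable {α : Type*} [DecidableEq α]

/-- The twist of a collection of feasible sets with respect to `A`. -/
noncomputable def SS.twist (A : Finset α) (F : Finset (Finset α)) : Finset (Finset α) :=
  F.image (fun X => symmDiff A X)

/-- Loop complementation at a single element `e`. -/
noncomputable def SS.lc (e : α) (F : Finset (Finset α)) : Finset (Finset α) :=
  symmDiff F ((F.filter (fun X => e ∉ X)).image (insert e))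

/-- The two generating operations: twist `*` and loop complementation `×`. -/
inductive SS.Op | star | cross

/-- Apply a single operation at a single element. -/
noncomputable def SS.opElem : SS.Op → α → Finset (Finset α) → Finset (Finset α)
  | .star, e, F => SS.twist {e} F
  | .cross, e, F => SS.lc e F

/-- Apply a word in `{*, ×}` at a single element. -/
noncomputable def SS.wordElem (w : List SS.Op) (e : α) (F : Finset (Finset α)) : Finset (Finset α) :=
  w.foldl (fun F o => SS.opElem o e F) F

/-- Apply a word in `{*, ×}` elementwise on a subset `A`. -/
noncomputable def SS.wordOn (w : List SS.Op) (A : Finset α) (F : Finset (Finset α)) : Finset (Finset α) :=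
  A.toList.foldl (fun F e => SS.wordElem w e F) F

/-- Size of a largest feasible set. -/
noncomputable def SS.rmax (F : Finset (Finset α)) : ℕ := F.sup Finset.card

/-- Size of a smallest feasible set. -/
noncomputable def SS.rmin (F : Finset (Finset α)) : ℕ := sInf (Finset.card '' (F : Set (Finset α)))

/-- The width of a set system. -/
noncomputable def SS.width (F : Finset (Finset α)) : ℕ := SS.rmax F - SS.rmin F

/-- The minimum-cardinality feasible sets. -/
noncomputable def SS.Fmin (F : Finset (Finset α)) : Finset (Finset α) :=
  F.filter (fun X => X.card = SS.rmin F)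

/-- The maximum-cardinality feasible sets. -/
noncomputable def SS.Fmax (F : Finset (Finset α)) : Finset (Finset α) :=
  F.filter (fun X => X.card = SS.rmax F)

/-- The partial-`w` polynomial of a set system with ground set `E`. -/
noncomputable def SS.poly (w : List SS.Op) (E : Finset α) (F : Finset (Finset α)) :
    Polynomial ℤ :=
  ∑ A ∈ E.powerset, (Polynomial.X : Polynomial ℤ) ^ SS.width (SS.wordOn w A F)

/-- A proper set system satisfying the symmetric exchange axiom. -/
noncomputable def SS.IsDeltaMatroid (F : Finset (Finset α)) : Prop :=
  F.Nonempty ∧ ∀ X ∈ F, ∀ Y ∈ F, ∀ u ∈ symmDiff X Y,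
    ∃ v ∈ symmDiff X Y, symmDiff X {u, v} ∈ F

/-- Apply a sequence of single-element twists and loop complementations. -/
noncomputable def SS.seqApply : List (SS.Op × α) → Finset (Finset α) → Finset (Finset α)
  | [], F => F
  | (o, e) :: s, F => SS.seqApply s (SS.opElem o e F)

/-- A set system is vf-safe if every sequence of single-element twists and loop
complementations yields a delta-matroid. -/
noncomputable def SS.VfSafe (F : Finset (Finset α)) : Prop :=
  ∀ s : List (SS.Op × α), SS.IsDeltaMatroid (SS.seqApply s F)

/-- The direct sum of two set systems. -/
noncomputable def SS.dsum (F F' : Finset (Finset α)) : Finset (Finset α) :=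
  (F ×ˢ F').image (fun p => p.1 ∪ p.2)

open SS


lemma mem_lc_iff {e : α} {G : Finset (Finset α)} {X : Finset α} :
    X ∈ SS.lc e G ↔
      ((X ∈ G ∧ ¬(e ∈ X ∧ X.erase e ∈ G)) ∨ ((e ∈ X ∧ X.erase e ∈ G) ∧ X ∉ G)) := by
  have himg : X ∈ (G.filter (fun Y => e ∉ Y)).image (insert e) ↔ (e ∈ X ∧ X.erase e ∈ G) := by
    constructor
    · rintro h
      rw [Finset.mem_image] at h
      obtain ⟨Z, hZ, rfl⟩ := h
      rw [Finset.mem_filter] at hZ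
      refine ⟨Finset.mem_insert_self _ _, ?_⟩
      rw [Finset.erase_insert hZ.2]; exact hZ.1
    · rintro ⟨he, hZ⟩
      rw [Finset.mem_image]
      exact ⟨X.erase e, Finset.mem_filter.2 ⟨hZ, Finset.notMem_erase _ _⟩,
        Finset.insert_erase he⟩
  rw [SS.lc, Finset.mem_symmDiff, himg]

lemma sd_helper {E X : Finset α} (h : X ⊆ E) : symmDiff E X = E \ X := by
  rw [symmDiff_def]
  ext a
  simp only [Finset.sup_eq_union, Finset.mem_union, Finset.mem_sdiff]
  constructor
  · rintro (h1 | h2)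
    · exact h1
    · exact absurd (h h2.1) h2.2
  · exact Or.inl

lemma aux_fold (L : List α) : ∀ (G : Finset (Finset α)) (Y : Finset α),
    L.Nodup → (∀ e ∈ L, e ∉ Y) → Y ∈ G → (∀ X ∈ G, Y ⊆ X → X = Y) →
    Y ∪ L.toFinset ∈ L.foldl (fun G e => SS.lc e G) G := by
  induction L with
  | nil =>
    intro G Y _ _ hY _
    simp only [List.foldl_nil, List.toFinset_nil, Finset.union_empty]
    exact hY
  | cons e L ih =>
    intro G Y hnd hnY hY huniq
    have heY : e ∉ Y := hnY e (by simp)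
    have heL : e ∉ L := (List.nodup_cons.1 hnd).1
    have hY' : insert e Y ∈ SS.lc e G := by
      rw [mem_lc_iff]
      right
      constructor
      · refine ⟨Finset.mem_insert_self _ _, ?_⟩
        rw [Finset.erase_insert heY]; exact hY
      · intro h
        have := huniq _ h (Finset.subset_insert _ _)
        exact heY (this ▸ Finset.mem_insert_self e Y)
    have huniq' : ∀ X ∈ SS.lc e G, insert e Y ⊆ X → X = insert e Y := by
      intro X hX hsub
      have heX : e ∈ X := hsub (Finset.mem_insert_self _ _)
      have hYX : Y ⊆ X := (Finset.subset_insert _ _).trans hsub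
      rw [mem_lc_iff] at hX
      rcases hX with ⟨hXG, _⟩ | ⟨⟨_, hXe⟩, _⟩
      · exact absurd ((huniq _ hXG hYX) ▸ heX) heY
      · have : X.erase e = Y := by
          apply huniq _ hXe
          intro a ha
          exact Finset.mem_erase.2 ⟨fun h => heY (h ▸ ha), hYX ha⟩
        rw [← this, Finset.insert_erase heX]
    have := ih (SS.lc e G) (insert e Y) (List.nodup_cons.1 hnd).2
      (fun a ha => by
        simp only [Finset.mem_insert]
        rintro (rfl | h)
        · exact heL ha
        · exact hnY a (List.mem_cons_of_mem _ ha) h) hY' huniq'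
    simp only [List.foldl_cons]
    have hset : Y ∪ (e :: L).toFinset = insert e Y ∪ L.toFinset := by
      ext a
      simp only [List.toFinset_cons, Finset.mem_union, Finset.mem_insert]
      tauto
    rw [hset]
    exact this

theorem stmt7 (E : Finset α) (F : Finset (Finset α)) (hF : ∀ X ∈ F, X ⊆ E)
    (B : Finset α) (hB : B ∈ SS.Fmin (SS.twist E F)) :
    E ∈ SS.wordOn [SS.Op.cross] B F := by
  rw [SS.Fmin, Finset.mem_filter] at hB
  obtain ⟨hBmem, hBcard⟩ := hB
  rw [SS.twist, Finset.mem_image] at hBmem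
  obtain ⟨X₀, hX₀, hBdef⟩ := hBmem
  have hsub : X₀ ⊆ E := hF _ hX₀
  have hBeq : B = E \ X₀ := by rw [← hBdef, sd_helper hsub]
  have hmin : ∀ X ∈ F, B.card ≤ (E \ X).card := by
    intro X hX
    rw [hBcard, SS.rmin]
    apply Nat.sInf_le
    refine ⟨symmDiff E X, ?_, ?_⟩
    · rw [SS.twist]
      exact_mod_cast Finset.mem_image_of_mem _ hX
    · congr 1
      rw [sd_helper (hF _ hX)]
  have huniq : ∀ X ∈ F, X₀ ⊆ X → X = X₀ := by
    intro X hX hXX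
    have h1 : E \ X ⊆ E \ X₀ := Finset.sdiff_subset_sdiff (le_refl E) hXX
    have h2 : (E \ X₀).card ≤ (E \ X).card := hBeq ▸ hmin X hX
    have h3 : E \ X = E \ X₀ := Finset.eq_of_subset_of_card_le h1 h2
    have := congrArg (E \ ·) h3
    simpa [Finset.sdiff_sdiff_eq_self (hF _ hX), Finset.sdiff_sdiff_eq_self hsub] using this
  have key := aux_fold B.toList F X₀ (Finset.nodup_toList B)
    (fun e he => by
      rw [Finset.mem_toList, hBeq, Finset.mem_sdiff] at he
      exact he.2) hX₀ huniq
  have hunion : X₀ ∪ B.toList.toFinset = E := by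
    rw [Finset.toList_toFinset, hBeq]
    rw [Finset.union_sdiff_self_eq_union, Finset.union_eq_right.2 hsub]
  rw [SS.wordOn]
  have : ∀ (G : Finset (Finset α)) (L : List α),
      L.foldl (fun G e => SS.wordElem [SS.Op.cross] e G) G
        = L.foldl (fun G e => SS.lc e G) G := by
    intro G L
    induction L generalizing G with
    | nil => rfl
    | cons a L ih => simp only [List.foldl_cons]; rw [ih]; rfl
  rw [this]
  rw [← hunion]
  exact key
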